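/- arXiv:0907.3527 — 2 statements merged into one kernel-verified Lean document; each statement's English description precedes it below -/
import Mathlib

section
/- Let K be an algebraically closed field, n an even natural number, G an invertible symmetric n×n matrix over K, and A an n×n matrix over K satisfying Aᵀ * G * A = G. Then the multiplicity of 1 as a root of the characteristic polynomial of A plus the multiplicity of −1 as a root of the characteristic polynomial of A is an even number. -/
open Polynomial Matrix
open scoped Classical


lemma aux_even_card {α : Type*} [DecidableEq α] (f : α → α)
    (hf : Function.Involutive f) :
    ∀ s : Multiset α, s.map f = s → (∀ a ∈ s, f a ≠ a) → Even (Multiset.card s) := by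
  intro s
  induction s using Multiset.strongInductionOn with
  | ih s ih =>
    intro hmap hfix
    rcases Multiset.empty_or_exists_mem s with rfl | ⟨a, ha⟩
    · simp
    · have hfa : f a ∈ s := by rw [← hmap]; exact Multiset.mem_map_of_mem f ha
      have hne : f a ≠ a := hfix a ha
      have hfa' : f a ∈ s.erase a := Multiset.mem_erase_of_ne hne |>.2 hfa
      set t := (s.erase a).erase (f a) with ht
      have htlt : t < s := lt_of_le_of_lt (Multiset.erase_le _ _)
        (Multiset.erase_lt.2 ha)
      have htmap : t.map f = t := by
        rw [ht, Multiset.map_erase f hf.injective, Multiset.map_erase f hf.injective,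
          hmap, hf a, Multiset.erase_comm]
      have hcard : Multiset.card s = Multiset.card t + 2 := by
        rw [ht, Multiset.card_erase_of_mem hfa', Multiset.card_erase_of_mem ha]
        simp only [Nat.pred_eq_sub_one]
        have h2 : 0 < Multiset.card (s.erase a) := Multiset.card_pos.2 (by
          rintro h; rw [h] at hfa'; simp at hfa')
        have h1 : Multiset.card (s.erase a) = Multiset.card s - 1 := by
          rw [Multiset.card_erase_of_mem ha, Nat.pred_eq_sub_one]
        omega
      have := ih t htlt htmap (fun b hb => hfix b (Multiset.mem_of_le
        (le_trans (Multiset.erase_le _ _) (Multiset.erase_le _ _)) hb))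
      rw [hcard]
      exact this.add (even_two)

lemma aux_charpoly_transpose {n : ℕ} {K : Type*} [Field K] (A : Matrix (Fin n) (Fin n) K) :
    Aᵀ.charpoly = A.charpoly := by
  rw [Matrix.charpoly, Matrix.charpoly, ← Matrix.det_transpose (charmatrix A)]
  congr 1
  ext i j
  by_cases h : i = j
  · subst h; simp
  · simp [charmatrix_apply_ne _ _ _ h, charmatrix_apply_ne _ _ _ (Ne.symm h),
      Matrix.transpose_apply]

lemma aux_charpoly_conj {n : ℕ} {K : Type*} [Field K]
    (P B : Matrix (Fin n) (Fin n) K) (hP : IsUnit P.det) :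
    (P⁻¹ * B * P).charpoly = B.charpoly := by
  have hPP : P * P⁻¹ = 1 := Matrix.mul_nonsing_inv P hP
  have hdetP : (P.map C).det = C P.det := (RingHom.map_det C P).symm
  have hdetP0 : (P.map C).det ≠ 0 := by
    rw [hdetP]; exact fun h => hP.ne_zero (by simpa using h)
  have key : (P.map (C : K →+* K[X])) * charmatrix (P⁻¹ * B * P)
      = charmatrix B * (P.map C) := by
    unfold charmatrix
    rw [mul_sub, sub_mul]
    congr 1
    · exact (Matrix.scalar_commute (X : K[X]) (fun r => Commute.all X r) (P.map C)).symm
    · simp only [RingHom.mapMatrix_apply]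
      rw [← Matrix.map_mul, ← Matrix.map_mul, ← mul_assoc, ← mul_assoc, hPP, one_mul]
  have := congrArg Matrix.det key
  rw [Matrix.det_mul, Matrix.det_mul] at this
  rw [Matrix.charpoly, Matrix.charpoly]
  exact mul_left_cancel₀ hdetP0 (by rw [this, mul_comm])

lemma aux_reverse {n : ℕ} {K : Type*} [Field K]
    (A : Matrix (Fin n) (Fin n) K) (hA : IsUnit A.det) :
    C A.det * (A⁻¹).charpoly = (-1 : K[X]) ^ n * (A.charpoly).reverse := by
  rw [Matrix.reverse_charpoly]
  have hAA : A * A⁻¹ = 1 := Matrix.mul_nonsing_inv A hA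
  have key : (A.map (C : K →+* K[X])) * charmatrix (A⁻¹)
      = -(1 - (X : K[X]) • A.map C) := by
    unfold charmatrix
    rw [mul_sub]
    simp only [RingHom.mapMatrix_apply]
    rw [← Matrix.map_mul, hAA, Matrix.map_one C (map_zero C) (map_one C),
      neg_sub]
    congr 1
    rw [← (Matrix.scalar_commute (X : K[X]) (fun r => Commute.all X r) (A.map C)).eq,
      Matrix.scalar_apply, ← Matrix.smul_eq_diagonal_mul]
  have hd := congrArg Matrix.det key
  rw [Matrix.det_mul, Matrix.det_neg, Fintype.card_fin] at hd
  rw [show (A⁻¹).charpoly = (charmatrix A⁻¹).det from rfl,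
    RingHom.map_det, RingHom.mapMatrix_apply, hd,
    show A.charpolyRev = (1 - (X : K[X]) • A.map C).det from rfl]

lemma aux_reverse_prod {K : Type*} [Field K] (s : Multiset K[X]) :
    s.prod.reverse = (s.map Polynomial.reverse).prod := by
  induction s using Multiset.induction with
  | empty => simp [Polynomial.reverse]
  | cons a s ih => simp [Polynomial.reverse_mul_of_domain, ih]

lemma aux_reverse_X_sub_C {K : Type*} [Field K] (a : K) :
    (X - C a).reverse = 1 - C a * X := by
  rw [Polynomial.reverse, Polynomial.natDegree_X_sub_C, sub_eq_add_neg,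
    Polynomial.reflect_add, Polynomial.reflect_neg, Polynomial.reflect_C,
    ← pow_one (X : K[X]), Polynomial.reflect_monomial]
  simp [sub_eq_add_neg]

lemma aux_roots_inv {K : Type*} [Field K] [IsAlgClosed K] (p : K[X]) (hp : p.Monic)
    (c : K) (hc : c ≠ 0) (hrev : p.reverse = C c * p) (h0 : ¬ p.IsRoot 0) :
    p.roots.map (·⁻¹) = p.roots := by
  have hs : p = (p.roots.map fun a => X - C a).prod :=
    (IsAlgClosed.splits p).eq_prod_roots_of_monic hp
  have h0' : ∀ a ∈ p.roots, a ≠ 0 := by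
    intro a ha h
    exact h0 (h ▸ isRoot_of_mem_roots ha)
  have hrev2 : p.reverse = (p.roots.map fun a => 1 - C a * X).prod := by
    conv_lhs => rw [hs]
    rw [aux_reverse_prod, Multiset.map_map]
    congr 1
    exact Multiset.map_congr rfl fun a _ => aux_reverse_X_sub_C a
  have hfac : ∀ a ∈ p.roots, (1 : K[X]) - C a * X = C (-a) * (X - C a⁻¹) := by
    intro a ha
    have h1 : C a * C a⁻¹ = (1 : K[X]) := by
      rw [← C_mul, mul_inv_cancel₀ (h0' a ha), Polynomial.C_1]
    simp only [map_neg]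
    linear_combination -h1
  have hrev3 : p.reverse
      = C ((p.roots.map fun a => -a).prod) * ((p.roots.map fun a => a⁻¹).map
          fun b => X - C b).prod := by
    rw [hrev2, Multiset.map_congr rfl hfac, Multiset.prod_map_mul]
    congr 1
    · rw [map_multiset_prod, Multiset.map_map]
      simp [Function.comp]
    · rw [Multiset.map_map]
      rfl
  have hd : ((p.roots.map fun a => -a).prod) ≠ 0 := by
    intro hzero
    obtain ⟨a, ha, ha2⟩ := Multiset.mem_map.1 (Multiset.prod_eq_zero_iff.1 hzero)
    exact h0' a ha (neg_eq_zero.1 ha2)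
  have := congrArg Polynomial.roots (hrev3.symm.trans hrev)
  rw [roots_C_mul _ hd, roots_C_mul _ hc, roots_multiset_prod_X_sub_C] at this
  exact this


/-- Over an algebraically closed field, if `n` is even and `A` preserves a
nondegenerate symmetric bilinear form with Gram matrix `G`, then the multiplicity
of `1` plus the multiplicity of `-1` as roots of `charpoly A` is even. -/
theorem even_count_one_add_count_neg_one_charpoly_roots_of_preserves_form
    {K : Type*} [Field K] [IsAlgClosed K] {n : ℕ} (hn : Even n)
    (G A : Matrix (Fin n) (Fin n) K)
    (hG : IsUnit G) (hGsymm : Gᵀ = G)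
    (hA : Aᵀ * G * A = G) :
    Even (A.charpoly.roots.count 1 + A.charpoly.roots.count (-1)) := by
  classical
  set p := A.charpoly with hpdef
  have hmonic : p.Monic := A.charpoly_monic
  have hGd : IsUnit G.det := (Matrix.isUnit_iff_isUnit_det G).1 hG
  have hAdet : A.det ≠ 0 := by
    intro h
    have hd := congrArg Matrix.det hA
    rw [Matrix.det_mul, Matrix.det_mul, Matrix.det_transpose, h] at hd
    simp at hd
    exact hGd.ne_zero hd.symm
  have hAinv : A⁻¹ = G⁻¹ * Aᵀ * G := by
    apply Matrix.inv_eq_left_inv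
    have h2 : G⁻¹ * Aᵀ * G * A = G⁻¹ * (Aᵀ * G * A) := by
      simp only [mul_assoc]
    rw [h2, hA]
    exact Matrix.nonsing_inv_mul G hGd
  have hcpinv : (A⁻¹).charpoly = p := by
    rw [hAinv, aux_charpoly_conj G Aᵀ hGd, aux_charpoly_transpose]
  have hrev0 := aux_reverse A (isUnit_iff_ne_zero.2 hAdet)
  rw [hcpinv] at hrev0
  have hsq : ((-1 : K[X]) ^ n) * ((-1 : K[X]) ^ n) = 1 := by
    rw [← pow_add, ← two_mul, pow_mul]
    simp
  have hrev : p.reverse = C ((-1 : K) ^ n * A.det) * p := by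
    calc p.reverse = ((-1 : K[X]) ^ n * (-1 : K[X]) ^ n) * p.reverse := by
          rw [hsq, one_mul]
      _ = (-1 : K[X]) ^ n * (C A.det * p) := by rw [mul_assoc, ← hrev0]
      _ = C ((-1 : K) ^ n * A.det) * p := by
          rw [Polynomial.C_mul, Polynomial.C_pow, map_neg, Polynomial.C_1, mul_assoc]
  have hc : (-1 : K) ^ n * A.det ≠ 0 :=
    mul_ne_zero (pow_ne_zero _ (neg_ne_zero.2 one_ne_zero)) hAdet
  have h0 : ¬ p.IsRoot 0 := by
    intro h
    have hc0 : p.coeff 0 = 0 := by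
      rwa [Polynomial.coeff_zero_eq_eval_zero]
    have hds := Matrix.det_eq_sign_charpoly_coeff A
    rw [Fintype.card_fin, ← hpdef, hc0, mul_zero] at hds
    exact hAdet hds
  have hmapinv : p.roots.map (·⁻¹) = p.roots :=
    aux_roots_inv p hmonic _ hc hrev h0
  have hcard : Multiset.card p.roots = n := by
    have hsp := (Polynomial.splits_iff_card_roots).1 (IsAlgClosed.splits p)
    rw [hsp, hpdef, Matrix.charpoly_natDegree_eq_dim, Fintype.card_fin]
  by_cases h1 : (1 : K) = -1
  · rw [← h1]
    exact Even.add_self _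
  -- main case
  set q : K → Prop := fun x => x = 1 ∨ x = -1 with hq
  set t := p.roots.filter (fun x => ¬ q x) with ht
  have hcards : Multiset.card (p.roots.filter q) + Multiset.card t = n := by
    rw [← Multiset.card_add, Multiset.filter_add_not q p.roots, hcard]
  have hfq : Multiset.card (p.roots.filter q)
      = p.roots.count 1 + p.roots.count (-1) := by
    have h2 : p.roots.filter (fun x => x = 1) + p.roots.filter (fun x => x = -1)
        = p.roots.filter q + p.roots.filter (fun x => x = 1 ∧ x = -1) :=
      Multiset.filter_add_filter _ _ _
    have h3 : p.roots.filter (fun x => x = 1 ∧ x = -1) = 0 := by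
      rw [Multiset.filter_eq_nil]
      rintro a ha ⟨rfl, h⟩
      exact h1 h
    rw [h3, add_zero] at h2
    rw [← h2, Multiset.card_add,
      Multiset.count_eq_card_filter_eq, Multiset.count_eq_card_filter_eq]
    congr 2 <;> ext a <;> simp [eq_comm]
  have h0mem : ∀ a ∈ p.roots, a ≠ 0 := by
    intro a ha h
    exact h0 (h ▸ isRoot_of_mem_roots ha)
  have hcountinv : ∀ b : K, p.roots.count b = p.roots.count b⁻¹ := by
    intro b
    conv_lhs => rw [← hmapinv]
    rw [show b = (b⁻¹)⁻¹ by rw [inv_inv]]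
    rw [Multiset.count_map_eq_count' _ _ inv_injective]
    rw [inv_inv]
  have htmap : t.map (·⁻¹) = t := by
    ext b
    rw [show (Multiset.count b (t.map (·⁻¹))) = t.count b⁻¹ by
      conv_lhs => rw [show b = (b⁻¹)⁻¹ by rw [inv_inv]]
      exact Multiset.count_map_eq_count' _ _ inv_injective _]
    rw [ht, Multiset.count_filter, Multiset.count_filter]
    have hqb : (¬ q b⁻¹) ↔ (¬ q b) := by
      apply not_congr
      rw [hq]
      simp only [inv_eq_one, inv_eq_iff_eq_inv, inv_neg, inv_one]
    by_cases hb : q b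
    · rw [if_neg (by rw [hqb]; exact not_not_intro hb), if_neg (not_not_intro hb)]
    · rw [if_pos (hqb.2 hb), if_pos hb, ← hcountinv b]
  have htfix : ∀ a ∈ t, a⁻¹ ≠ a := by
    intro a hat heq
    have has : a ∈ p.roots := Multiset.mem_of_mem_filter hat
    have ha0 : a ≠ 0 := h0mem a has
    have hsq : a * a = 1 := by
      have := congrArg (· * a) heq
      simpa [inv_mul_cancel₀ ha0] using this.symm
    have : (a - 1) * (a + 1) = 0 := by linear_combination hsq
    rcases mul_eq_zero.1 this with h | h
    · exact (Multiset.mem_filter.1 hat).2 (Or.inl (sub_eq_zero.1 h))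
    · exact (Multiset.mem_filter.1 hat).2 (Or.inr (eq_neg_of_add_eq_zero_left h))
  have hteven : Even (Multiset.card t) :=
    aux_even_card (·⁻¹) inv_involutive t htmap htfix
  have : Even (p.roots.count 1 + p.roots.count (-1) + Multiset.card t) := by
    rw [← hfq, hcards]; exact hn
  exact (Nat.even_add.1 this).2 hteven
end

section
/- Let K be an algebraically closed field, n an even natural number, G an invertible symmetric n×n matrix over K, and A an n×n matrix over K satisfying Aᵀ * G * A = G. Then the number, counted with multiplicity, of roots of the characteristic polynomial of A that are roots of unity is even. -/
open Polynomial Matrix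
open scoped Classical

lemma my_eval_charpoly {K : Type*} [CommRing K] {n : ℕ} (M : Matrix (Fin n) (Fin n) K) (t : K) :
    M.charpoly.eval t = (t • (1 : Matrix (Fin n) (Fin n) K) - M).det := by
  rw [Matrix.charpoly, ← Polynomial.coe_evalRingHom, RingHom.map_det]
  congr 1
  ext i j
  by_cases h : i = j <;>
    simp [Matrix.charmatrix_apply, Matrix.one_apply, h, Matrix.smul_apply, Matrix.sub_apply]

lemma my_even_card_of_inv {α : Type*} {f : α → α} (hf : Function.Involutive f) :
    ∀ (M : Multiset α), M.map f = M → (∀ a ∈ M, f a ≠ a) → Even (Multiset.card M) := by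
  intro M
  induction M using Multiset.strongInductionOn with
  | ih M ih =>
    intro hmap hfp
    rcases M.empty_or_exists_mem with rfl | ⟨a, ha⟩
    · simp
    · have hfa : f a ∈ M := by
        rw [← hmap]; exact Multiset.mem_map_of_mem f ha
      have hne : f a ≠ a := hfp a ha
      set M' := (M.erase a).erase (f a) with hM'
      have hfa' : f a ∈ M.erase a := Multiset.mem_erase_of_ne hne |>.mpr hfa
      have hMeq : M = a ::ₘ f a ::ₘ M' := by
        rw [hM', Multiset.cons_erase hfa', Multiset.cons_erase ha]
      have hlt : M' < M := by
        calc M' ≤ M.erase a := Multiset.erase_le _ _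
        _ < M := Multiset.erase_lt.mpr ha
      have hmap' : M'.map f = M' := by
        rw [hM', Multiset.map_erase _ hf.injective, Multiset.map_erase _ hf.injective,
          hmap, hf a, Multiset.erase_comm]
      have hfp' : ∀ b ∈ M', f b ≠ b := fun b hb =>
        hfp b (Multiset.mem_of_le (le_of_lt hlt) hb)
      obtain ⟨r, hr⟩ := ih M' hlt hmap' hfp'
      rw [hMeq]; simp only [Multiset.card_cons]
      exact ⟨r + 1, by omega⟩

/-- Over an algebraically closed field, if `n` is even and `A` preserves a
nondegenerate symmetric bilinear form with Gram matrix `G`, then the number of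
roots of `charpoly A` (counted with multiplicity) that are roots of unity is even. -/
theorem even_card_charpoly_roots_rootOfUnity_of_preserves_form
    {K : Type*} [Field K] [IsAlgClosed K] {n : ℕ} (hn : Even n)
    (G A : Matrix (Fin n) (Fin n) K)
    (hG : IsUnit G) (hGsymm : Gᵀ = G)
    (hA : Aᵀ * G * A = G) :
    Even (Multiset.card
      (A.charpoly.roots.filter fun α => ∃ k : ℕ, 0 < k ∧ α ^ k = 1)) := by
  have hGd : IsUnit G.det := (Matrix.isUnit_iff_isUnit_det G).mp hG
  have hGd0 : G.det ≠ 0 := hGd.ne_zero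
  -- A is invertible
  have hAd0 : A.det ≠ 0 := by
    intro h0
    have := congrArg Matrix.det hA
    rw [Matrix.det_mul, Matrix.det_mul, Matrix.det_transpose, h0] at this
    simp at this
    exact hGd0 this.symm
  have hAd : IsUnit A.det := isUnit_iff_ne_zero.mpr hAd0
  -- basic inverse facts
  have hAinv : A * A⁻¹ = 1 := Matrix.mul_nonsing_inv A hAd
  have hAinv' : A⁻¹ * A = 1 := Matrix.nonsing_inv_mul A hAd
  have hAtG : Aᵀ * G = G * A⁻¹ := by
    calc Aᵀ * G = Aᵀ * G * (A * A⁻¹) := by rw [hAinv, mul_one]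
    _ = (Aᵀ * G * A) * A⁻¹ := by simp only [Matrix.mul_assoc]
    _ = G * A⁻¹ := by rw [hA]
  have hdetAinv : A⁻¹.det = A.det⁻¹ := by
    rw [Matrix.det_nonsing_inv, Ring.inverse_eq_inv]
  -- roots setup
  set p := A.charpoly with hp
  have hmonic : p.Monic := A.charpoly_monic
  have hsplits : Splits p := IsAlgClosed.splits p
  have hcard : Multiset.card p.roots = n := by
    rw [(Polynomial.splits_iff_card_roots).mp hsplits, hp, A.charpoly_natDegree_eq_dim,
      Fintype.card_fin]
  have hprod : p = (p.roots.map fun a => X - C a).prod :=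
    hsplits.eq_prod_roots_of_monic hmonic
  set R := p.roots with hR
  -- product of the roots is det A
  have hdet : R.prod = A.det := by
    have h0 : p.eval 0 = A.det := by
      rw [my_eval_charpoly]
      simp only [zero_smul, zero_sub, Matrix.det_neg, Fintype.card_fin]
      rw [hn.neg_one_pow, one_mul]
    have h1 : p.eval 0 = R.prod := by
      conv_lhs => rw [hprod]
      rw [eval_multiset_prod, Multiset.map_map]
      rw [show (Multiset.map ((fun q => eval 0 q) ∘ fun a => X - C a) R) =
        R.map fun a => -a by simp [Function.comp]]
      rw [show (R.map fun a => -a) = R.map ((fun a => (-1 : K) * a)) by simp,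
        Multiset.prod_map_mul]
      simp [Multiset.map_const', hcard, hn.neg_one_pow]
    rw [← h1, h0]
  have hroot0 : ∀ a ∈ R, a ≠ 0 := by
    intro a ha h0
    exact hAd0 (by rw [← hdet]; exact Multiset.prod_eq_zero (h0 ▸ ha))
  -- the "reciprocal" polynomial q, with roots the inverses of those of p
  set q : K[X] := ((R.map fun a => a⁻¹).map fun a => X - C a).prod with hq
  have hq_eval : ∀ t : K, q.eval t = (R.map fun a => t - a⁻¹).prod := by
    intro t
    rw [hq, eval_multiset_prod, Multiset.map_map, Multiset.map_map]
    congr 1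
    apply Multiset.map_congr rfl
    intro a _
    simp [Function.comp]
  have hp_eval : ∀ t : K, p.eval t = (R.map fun a => t - a).prod := by
    intro t
    conv_lhs => rw [hprod]
    rw [eval_multiset_prod, Multiset.map_map]
    apply congrArg
    apply Multiset.map_congr rfl
    intro a _
    simp [Function.comp]
  -- key evaluation identity : p(t) = q(t) for t ≠ 0
  have key : ∀ t : K, t ≠ 0 → p.eval t = q.eval t := by
    intro t ht
    -- step 1 : p(t) = det A⁻¹ * det (t•A - 1)
    have e1 : p.eval t = A.det⁻¹ * (t • A - 1).det := by
      rw [my_eval_charpoly]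
      have e2 : ((t • (1 : Matrix (Fin n) (Fin n) K) - A)).det = (t • 1 - Aᵀ).det := by
        rw [← Matrix.det_transpose (t • 1 - A), Matrix.transpose_sub, Matrix.transpose_smul,
          Matrix.transpose_one]
      have e3 : (t • (1 : Matrix (Fin n) (Fin n) K) - Aᵀ) * G = G * (t • 1 - A⁻¹) := by
        rw [Matrix.sub_mul, Matrix.mul_sub, Matrix.smul_mul, Matrix.mul_smul, Matrix.one_mul,
          Matrix.mul_one, hAtG]
      have e4 : (t • (1 : Matrix (Fin n) (Fin n) K) - Aᵀ).det = (t • 1 - A⁻¹).det := by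
        have h := congrArg Matrix.det e3
        rw [Matrix.det_mul, Matrix.det_mul, mul_comm] at h
        exact mul_left_cancel₀ hGd0 h
      have e5 : t • (1 : Matrix (Fin n) (Fin n) K) - A⁻¹ = A⁻¹ * (t • A - 1) := by
        rw [Matrix.mul_sub, Matrix.mul_smul, hAinv', Matrix.mul_one]
      rw [e2, e4, e5, Matrix.det_mul, hdetAinv]
    -- step 2 : det (t•A - 1) = t^n * p(t⁻¹)
    have e6 : (t • A - (1 : Matrix (Fin n) (Fin n) K)).det =
        t ^ n * p.eval t⁻¹ := by
      have e7 : t • A - (1 : Matrix (Fin n) (Fin n) K) =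
          (-1 : K) • (t • ((t⁻¹ • (1 : Matrix (Fin n) (Fin n) K)) - A)) := by
        rw [smul_sub, smul_smul, mul_inv_cancel₀ ht, one_smul, neg_one_smul, neg_sub]
      rw [e7, Matrix.det_smul, Matrix.det_smul, Fintype.card_fin, hn.neg_one_pow, one_mul,
        my_eval_charpoly]
    -- step 3 : t^n * p(t⁻¹) = det A * q(t)
    have e8 : t ^ n * p.eval t⁻¹ = A.det * q.eval t := by
      rw [hp_eval, hq_eval, ← hdet]
      have l1 : t ^ n * (R.map fun a => t⁻¹ - a).prod = (R.map fun a => 1 - t * a).prod := by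
        rw [show (t ^ n : K) = (R.map fun _ => t).prod by
          simp [Multiset.map_const', hcard], ← Multiset.prod_map_mul]
        congr 1
        apply Multiset.map_congr rfl
        intro a _
        field_simp
      have l2 : R.prod * (R.map fun a => t - a⁻¹).prod = (R.map fun a => 1 - t * a).prod := by
        conv_lhs => rw [show R.prod = (R.map fun a => a).prod by simp]
        rw [← Multiset.prod_map_mul]
        rw [show (R.map fun a => a * (t - a⁻¹)) = R.map fun a => (-1 : K) * (1 - t * a) by
          apply Multiset.map_congr rfl
          intro a ha
          field_simp [hroot0 a ha]
          ring]
        rw [Multiset.prod_map_mul]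
        simp [Multiset.map_const', hcard, hn.neg_one_pow]
      rw [l1, l2]
    rw [e1, e6, e8, ← mul_assoc, inv_mul_cancel₀ hAd0, one_mul]
  -- conclude p = q
  have hpq : p = q := by
    have hsub : p - q = 0 := by
      apply Polynomial.eq_zero_of_infinite_isRoot
      refine Set.Infinite.mono ?_ ((Set.finite_singleton (0 : K)).infinite_compl)
      intro t ht
      have htn : t ≠ 0 := ht
      simp only [Set.mem_setOf_eq, IsRoot.def, eval_sub]
      rw [key t htn, sub_self]
    linear_combination (norm := ring_nf) hsub
  -- roots are stable under inversion
  have hRinv : R.map (fun a => a⁻¹) = R := by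
    have h1 : q.roots = R.map (fun a => a⁻¹) := roots_multiset_prod_X_sub_C _
    rw [← h1, ← hpq]
  -- combinatorics
  have hPinv : ∀ α : K, (∃ k : ℕ, 0 < k ∧ (α⁻¹) ^ k = 1) ↔ (∃ k : ℕ, 0 < k ∧ α ^ k = 1) := by
    intro α
    constructor <;> rintro ⟨k, hk, h1⟩ <;> refine ⟨k, hk, ?_⟩
    · rw [← inv_inv α, inv_pow, h1, inv_one]
    · rw [inv_pow, h1, inv_one]
  set N := R.filter (fun α => ¬ ∃ k : ℕ, 0 < k ∧ α ^ k = 1) with hN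
  have hNmap : N.map (fun a => a⁻¹) = N := by
    conv_rhs => rw [hN]
    conv_rhs => rw [← hRinv]
    rw [Multiset.filter_map]
    congr 1
    apply Multiset.filter_congr
    intro a _
    simp only [Function.comp]
    rw [hPinv]
  have hNfp : ∀ a ∈ N, a⁻¹ ≠ a := by
    intro a ha heq
    obtain ⟨haR, hnP⟩ := Multiset.mem_filter.mp ha
    exact hnP ⟨2, by norm_num, by
      rw [pow_two]
      nth_rewrite 2 [← heq]
      exact mul_inv_cancel₀ (hroot0 a haR)⟩
  have hNeven : Even (Multiset.card N) :=
    my_even_card_of_inv inv_involutive N hNmap hNfp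
  have hsplit : Multiset.card (R.filter fun α => ∃ k : ℕ, 0 < k ∧ α ^ k = 1)
      + Multiset.card N = n := by
    rw [hN, ← Multiset.card_add, Multiset.filter_add_not, hcard]
  obtain ⟨r, hr⟩ := hNeven
  obtain ⟨s, hs⟩ := hn
  exact ⟨s - r, by omega⟩
end
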